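/- Let |+⟩ = (e₀ + e₁)/√2 and |−⟩ = (e₀ − e₁)/√2 in ℂ², let a, b ∈ ℂ with |a|² + |b|² = 1, and let χ : (Fin 2 × Fin 2) → ℂ be the vector χ = a • (|+⟩ ⊗ |−⟩) + b • (|−⟩ ⊗ |+⟩). Let E_Bell = 2•1 + √2 • (σx ⊗ₖ σx + σy ⊗ₖ σy), where σx = !![0,1;1,0] and σy = !![0,−i;i,0]. Then the quadratic form ⟨χ, E_Bell.mulVec χ⟩ equals 2 − √2 + 2√2·Re(conj(a)·b). In particular it is negative if and only if Re(conj(a)·b) < −(√2 − 1)/2. -/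

import Mathlib

open Matrix Kronecker

set_option maxHeartbeats 1000000 in
/-- The expectation value of the Bell-CHSH observable
`E_Bell = 2•1 + √2 (σx ⊗ₖ σx + σy ⊗ₖ σy)` in the state `χ = a|+−⟩ + b|−+⟩`
equals `2 − √2 + 2√2 Re(a̅ b)`; in particular it is negative iff
`Re(a̅ b) < −(√2 − 1)/2`. -/
theorem bell_expectation_in_chi
    (plus minus : Fin 2 → ℂ)
    (hplus : plus = ![((1 / Real.sqrt 2 : ℝ) : ℂ), ((1 / Real.sqrt 2 : ℝ) : ℂ)])
    (hminus : minus = ![((1 / Real.sqrt 2 : ℝ) : ℂ), (-(1 / Real.sqrt 2 : ℝ) : ℂ)])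
    (a b : ℂ) (hab : ‖a‖ ^ 2 + ‖b‖ ^ 2 = 1)
    (χ : Fin 2 × Fin 2 → ℂ)
    (hχ : ∀ p : Fin 2 × Fin 2,
      χ p = a * plus p.1 * minus p.2 + b * minus p.1 * plus p.2)
    (σx σy : Matrix (Fin 2) (Fin 2) ℂ)
    (hσx : σx = !![0, 1; 1, 0])
    (hσy : σy = !![0, -Complex.I; Complex.I, 0])
    (EBell : Matrix (Fin 2 × Fin 2) (Fin 2 × Fin 2) ℂ)
    (hEBell : EBell = (2 : ℂ) • (1 : Matrix (Fin 2 × Fin 2) (Fin 2 × Fin 2) ℂ)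
      + (Real.sqrt 2 : ℂ) • (σx ⊗ₖ σx + σy ⊗ₖ σy)) :
    (∑ p : Fin 2 × Fin 2, ∑ q : Fin 2 × Fin 2,
        (starRingEnd ℂ) (χ p) * EBell p q * χ q)
      = ((2 - Real.sqrt 2 + 2 * Real.sqrt 2 * ((starRingEnd ℂ) a * b).re : ℝ) : ℂ) ∧
    ((∑ p : Fin 2 × Fin 2, ∑ q : Fin 2 × Fin 2,
        (starRingEnd ℂ) (χ p) * EBell p q * χ q).re < 0
      ↔ ((starRingEnd ℂ) a * b).re < -(Real.sqrt 2 - 1) / 2) := by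
  have key : (∑ p : Fin 2 × Fin 2, ∑ q : Fin 2 × Fin 2,
        (starRingEnd ℂ) (χ p) * EBell p q * χ q)
      = ((2 - Real.sqrt 2 + 2 * Real.sqrt 2 * ((starRingEnd ℂ) a * b).re : ℝ) : ℂ) := by
    have hab' : (starRingEnd ℂ) a * a + (starRingEnd ℂ) b * b = 1 := by
      rw [mul_comm ((starRingEnd ℂ) a) a, mul_comm ((starRingEnd ℂ) b) b,
        Complex.mul_conj, Complex.mul_conj]
      rw [Complex.normSq_eq_norm_sq, Complex.normSq_eq_norm_sq]
      exact_mod_cast hab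
    have hre : (starRingEnd ℂ) a * b + (starRingEnd ℂ) b * a
        = 2 * ((((starRingEnd ℂ) a * b).re : ℝ) : ℂ) := by
      have h := Complex.add_conj ((starRingEnd ℂ) a * b)
      simp only [_root_.map_mul, Complex.conj_conj] at h
      push_cast at h ⊢
      linear_combination h
    have hs : (Real.sqrt 2 : ℂ) * (Real.sqrt 2 : ℂ) = 2 := by
      norm_cast
      exact Real.mul_self_sqrt (by norm_num)
    have ht : ((1 / Real.sqrt 2 : ℝ) : ℂ) * ((1 / Real.sqrt 2 : ℝ) : ℂ) = 1 / 2 := by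
      push_cast
      rw [div_mul_div_comm, hs]
      norm_num
    subst hplus hminus hσx hσy hEBell
    simp only [hχ, Fintype.sum_prod_type, Fin.sum_univ_two, Matrix.one_apply,
      kroneckerMap_apply, Matrix.add_apply, Matrix.smul_apply, Matrix.cons_val_zero,
      Matrix.cons_val_one, Matrix.head_cons, Matrix.cons_val', Matrix.empty_val',
      Matrix.cons_val_fin_one, Matrix.head_fin_const, map_add, _root_.map_mul, map_neg,
      Complex.conj_ofReal, Complex.conj_I, smul_eq_mul, Prod.mk.injEq, if_true, if_false]
    norm_num
    have hu : (((Real.sqrt 2 : ℝ) : ℂ))⁻¹ * (((Real.sqrt 2 : ℝ) : ℂ))⁻¹ = 1/2 := by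
      rw [← mul_inv, hs]; norm_num
    have hre2 : (starRingEnd ℂ) a * b + (starRingEnd ℂ) b * a
        = 2 * ((a.re : ℂ) * b.re + (a.im : ℂ) * b.im) := by
      rw [hre]
      norm_cast
      simp [Complex.mul_re]
    simp only [mul_assoc, hu]
    linear_combination (2 - ((Real.sqrt 2 : ℝ) : ℂ)) * hab' + ((Real.sqrt 2 : ℝ) : ℂ) * hre2
  refine ⟨key, ?_⟩
  rw [key, Complex.ofReal_re]
  have hpos : (0:ℝ) < Real.sqrt 2 := by positivity
  have hsq : Real.sqrt 2 * Real.sqrt 2 = 2 := Real.mul_self_sqrt (by norm_num)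
  set r := ((starRingEnd ℂ) a * b).re
  constructor
  · intro h
    nlinarith [h, hsq, hpos]
  · intro h
    nlinarith [h, hsq, hpos]
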